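/- Let M be an m×n matrix over ZMod 2, let k < j be column indices, and let M' be the matrix obtained from M by adding column k to column j (entrywise sum in ZMod 2). If R = M * V is a reduction of M and R' = M' * V' is a reduction of M', then for every column index l, column l of R is zero if and only if column l of R' is zero, and when nonzero low_R(l) = low_{R'}(l). -/

import Mathlib

/-- `i` is the lowest nonzero row index of column `j` of `R`. -/
def IsLow {m n : ℕ} (R : Matrix (Fin m) (Fin n) (ZMod 2)) (j : Fin n) (i : Fin m) : Prop :=
  R i j ≠ 0 ∧ ∀ i' : Fin m, R i' j ≠ 0 → i' ≤ i

/-- No two distinct nonzero columns of `R` have the same lowest nonzero row index. -/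
def Reduced {m n : ℕ} (R : Matrix (Fin m) (Fin n) (ZMod 2)) : Prop :=
  ∀ j k : Fin n, j ≠ k → ∀ i i' : Fin m, IsLow R j i → IsLow R k i' → i ≠ i'

/-- `W` is upper-triangular: `W i j = 0` whenever `i > j`. -/
def UpperTri {n : ℕ} (W : Matrix (Fin n) (Fin n) (ZMod 2)) : Prop :=
  ∀ i j : Fin n, j < i → W i j = 0

section Aux

open Matrix Finset

variable {m n : ℕ}

lemma exists_isLow (R : Matrix (Fin m) (Fin n) (ZMod 2)) (l : Fin n)
    (h : ∃ i, R i l ≠ 0) : ∃ i, IsLow R l i := by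
  obtain ⟨i0, hi0⟩ := h
  set T : Finset (Fin m) := Finset.univ.filter fun i => R i l ≠ 0 with hT
  have hTne : T.Nonempty := ⟨i0, by simp [hT, hi0]⟩
  refine ⟨T.max' hTne, ?_, ?_⟩
  · have := T.max'_mem hTne; simpa [hT] using this
  · intro i' hi'; exact T.le_max' i' (by simp [hT, hi'])

lemma key {R W : Matrix (Fin m) (Fin n) (ZMod 2)} {Wn : Matrix (Fin n) (Fin n) (ZMod 2)}
    (hW : W = R * Wn) (hUT : UpperTri Wn) (hRed : Reduced R)
    (l : Fin n) (i : Fin m) (h : IsLow W l i) :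
    ∃ p, p ≤ l ∧ IsLow R p i := by
  obtain ⟨hne, hmax⟩ := h
  have hsum : ∀ i' : Fin m, W i' l = ∑ c, R i' c * Wn c l := by
    intro i'; rw [hW]; rfl
  set T : Finset (Fin n) := Finset.univ.filter
    (fun c => Wn c l ≠ 0 ∧ ∃ i', R i' c ≠ 0) with hTdef
  have hmemT : ∀ {i' : Fin m} {c : Fin n}, R i' c * Wn c l ≠ 0 → c ∈ T := by
    intro i' c hc
    have h1 : R i' c ≠ 0 := fun h => hc (by simp [h])
    have h2 : Wn c l ≠ 0 := fun h => hc (by simp [h])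
    simp [hTdef, h2]; exact ⟨i', h1⟩
  have hTne : T.Nonempty := by
    rw [hsum] at hne
    obtain ⟨c, _, hc⟩ := Finset.exists_ne_zero_of_sum_ne_zero hne
    exact ⟨c, hmemT hc⟩
  have hfex : ∀ c ∈ T, ∃ i', IsLow R c i' := by
    intro c hc
    simp only [hTdef, Finset.mem_filter] at hc
    exact exists_isLow R c hc.2.2
  classical
  set f : Fin n → Fin m := fun c =>
    if hc : ∃ i', IsLow R c i' then Classical.choose hc else i with hfdef
  have hf : ∀ c ∈ T, IsLow R c (f c) := by
    intro c hc
    have := hfex c hc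
    simp only [hfdef, dif_pos this]
    exact Classical.choose_spec this
  obtain ⟨p, hpT, hpmax⟩ := T.exists_max_image f hTne
  have hWnp : Wn p l ≠ 0 := by
    simp only [hTdef, Finset.mem_filter] at hpT; exact hpT.2.1
  have hpl : p ≤ l := by
    by_contra hc
    exact hWnp (hUT p l (lt_of_not_ge hc))
  have hflow := hf p hpT
  have hWfp : W (f p) l ≠ 0 := by
    rw [hsum]
    have hsingle : ∑ c, R (f p) c * Wn c l = R (f p) p * Wn p l := by
      apply Finset.sum_eq_single
      · intro c _ hcp
        by_cases hcT : c ∈ T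
        · have hfc := hf c hcT
          have hne' : f c ≠ f p := hRed c p hcp (f c) (f p) hfc hflow
          have hlt : f c < f p := lt_of_le_of_ne (hpmax c hcT) hne'
          have : R (f p) c = 0 := by
            by_contra hr
            exact absurd (hfc.2 (f p) hr) (not_le_of_gt hlt)
          simp [this]
        · by_contra hne'
          exact hcT (hmemT hne')
      · intro h; exact absurd (Finset.mem_univ p) h
    rw [hsingle]
    exact mul_ne_zero hflow.1 hWnp
  have h1 : f p ≤ i := hmax (f p) hWfp
  have h2 : i ≤ f p := by
    rw [hsum] at hne
    obtain ⟨c, _, hc⟩ := Finset.exists_ne_zero_of_sum_ne_zero hne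
    have hcT := hmemT hc
    have hRic : R i c ≠ 0 := fun h => hc (by simp [h])
    exact le_trans ((hf c hcT).2 i hRic) (hpmax c hcT)
  have : i = f p := le_antisymm h2 h1
  exact ⟨p, hpl, this ▸ hflow⟩

lemma transfer {R S : Matrix (Fin m) (Fin n) (ZMod 2)}
    {Wn Wn' : Matrix (Fin n) (Fin n) (ZMod 2)}
    (hS : S = R * Wn) (hR : R = S * Wn')
    (hUT : UpperTri Wn) (hUT' : UpperTri Wn')
    (hRedR : Reduced R) (hRedS : Reduced S)
    (l : Fin n) (i : Fin m) (h : IsLow S l i) : IsLow R l i := by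
  obtain ⟨p, hpl, hp⟩ := key hS hUT hRedR l i h
  rcases eq_or_lt_of_le hpl with rfl | hlt
  · exact hp
  · exfalso
    obtain ⟨q, hqp, hq⟩ := key hR hUT' hRedS p i hp
    exact hRedS l q (lt_of_le_of_lt hqp hlt).ne' i i h hq rfl

lemma upperTri_mul {A B : Matrix (Fin n) (Fin n) (ZMod 2)}
    (hA : UpperTri A) (hB : UpperTri B) : UpperTri (A * B) := by
  intro i p hpi
  rw [Matrix.mul_apply]
  apply Finset.sum_eq_zero
  intro c _
  rcases lt_or_ge c i with h | h
  · rw [hA i c h, zero_mul]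
  · rw [hB c p (lt_of_lt_of_le hpi h), mul_zero]

lemma upperTri_inv {A : Matrix (Fin n) (Fin n) (ZMod 2)}
    (hA : UpperTri A) (hU : IsUnit A) : UpperTri A⁻¹ := by
  have : Invertible A := hU.invertible
  have hbt : A.BlockTriangular id := fun i p h => hA i p h
  have := Matrix.blockTriangular_inv_of_blockTriangular hbt
  exact fun i p h => this h

lemma E_mul_E {k j : Fin n} (hkj : k < j) :
    ((1 : Matrix (Fin n) (Fin n) (ZMod 2)) + Matrix.single k j 1) *
      (1 + Matrix.single k j 1) = 1 := by
  rw [mul_add, add_mul, add_mul, one_mul, mul_one,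
    Matrix.single_mul_single_of_ne (h := hkj.ne')]
  have hz : Matrix.single k j (1 : ZMod 2) + Matrix.single k j 1 = 0 := by
    ext a b; exact CharTwo.add_self_eq_zero _
  rw [add_zero, one_mul, add_assoc, hz, add_zero]

lemma upperTri_E {k j : Fin n} (hkj : k < j) :
    UpperTri ((1 : Matrix (Fin n) (Fin n) (ZMod 2)) + Matrix.single k j 1) := by
  intro i p hpi
  rw [Matrix.add_apply, Matrix.one_apply_ne (ne_of_gt hpi), zero_add,
    Matrix.single]
  simp only [Matrix.of_apply, ite_eq_right_iff, and_imp]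
  rintro rfl rfl
  exact absurd hkj (not_lt_of_gt hpi)

lemma M_mul_E {k j : Fin n} (M : Matrix (Fin m) (Fin n) (ZMod 2)) :
    M * ((1 : Matrix (Fin n) (Fin n) (ZMod 2)) + Matrix.single k j 1) =
      Matrix.of fun a b => if b = j then M a j + M a k else M a b := by
  ext a b
  rw [Matrix.mul_add, Matrix.mul_one, Matrix.add_apply]
  have : (M * Matrix.single k j (1 : ZMod 2)) a b = if b = j then M a k else 0 := by
    rw [Matrix.mul_apply]
    simp only [Matrix.single, Matrix.of_apply, mul_ite, mul_one, mul_zero, ite_and]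
    rw [Finset.sum_ite_eq Finset.univ k fun x => if j = b then M a x else 0]
    simp [eq_comm]
  rw [this]
  by_cases hb : b = j <;> simp [hb, add_comm]

end Aux

/-- If `M'` is obtained from `M` by adding column `k` to column `j` (with `k < j`), then any
reduction of `M` and any reduction of `M'` have the same zero columns and the same lowest
nonzero row indices on nonzero columns. -/
theorem reduction_addCol_pairing {m n : ℕ} (M : Matrix (Fin m) (Fin n) (ZMod 2)) (k j : Fin n)
    (hkj : k < j)
    (M' : Matrix (Fin m) (Fin n) (ZMod 2))
    (hM' : M' = Matrix.of fun a b => if b = j then M a j + M a k else M a b)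
    (V V' : Matrix (Fin n) (Fin n) (ZMod 2))
    (hV : IsUnit V) (hUT : UpperTri V) (hRed : Reduced (M * V))
    (hV' : IsUnit V') (hUT' : UpperTri V') (hRed' : Reduced (M' * V')) (l : Fin n) :
    ((∀ i : Fin m, (M * V) i l = 0) ↔ (∀ i : Fin m, (M' * V') i l = 0)) ∧
      ∀ i : Fin m, IsLow (M * V) l i ↔ IsLow (M' * V') l i := by
  set E : Matrix (Fin n) (Fin n) (ZMod 2) := 1 + Matrix.single k j 1 with hE
  have hME : M * E = M' := by rw [hE, M_mul_E, ← hM']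
  have hVdet : IsUnit V.det := (Matrix.isUnit_iff_isUnit_det V).1 hV
  have hV'det : IsUnit V'.det := (Matrix.isUnit_iff_isUnit_det V').1 hV'
  set Wn : Matrix (Fin n) (Fin n) (ZMod 2) := V⁻¹ * (E * V') with hWn
  set Wn' : Matrix (Fin n) (Fin n) (ZMod 2) := V'⁻¹ * (E * V) with hWn'
  have hVV : V * V⁻¹ = 1 := Matrix.mul_nonsing_inv V hVdet
  have hV'V' : V' * V'⁻¹ = 1 := Matrix.mul_nonsing_inv V' hV'det
  have hS : M' * V' = (M * V) * Wn := by
    rw [hWn, show (M * V) * (V⁻¹ * (E * V')) = M * (V * V⁻¹) * (E * V') by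
        simp only [Matrix.mul_assoc],
      hVV, Matrix.mul_one, ← hME, Matrix.mul_assoc]
  have hR : M * V = (M' * V') * Wn' := by
    rw [hWn', show (M' * V') * (V'⁻¹ * (E * V)) = M' * (V' * V'⁻¹) * (E * V) by
        simp only [Matrix.mul_assoc],
      hV'V', Matrix.mul_one, ← hME, show M * E * (E * V) = M * (E * E) * V by
        simp only [Matrix.mul_assoc],
      E_mul_E hkj, Matrix.mul_one]
  have hUTE : UpperTri E := upperTri_E hkj
  have hUTWn : UpperTri Wn := upperTri_mul (upperTri_inv hUT hV) (upperTri_mul hUTE hUT')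
  have hUTWn' : UpperTri Wn' := upperTri_mul (upperTri_inv hUT' hV') (upperTri_mul hUTE hUT)
  have hlow : ∀ i : Fin m, IsLow (M * V) l i ↔ IsLow (M' * V') l i := by
    intro i
    constructor
    · exact transfer hR hS hUTWn' hUTWn hRed' hRed l i
    · exact transfer hS hR hUTWn hUTWn' hRed hRed' l i
  refine ⟨?_, hlow⟩
  have hiff : (∃ i, (M * V) i l ≠ 0) ↔ (∃ i, (M' * V') i l ≠ 0) := by
    constructor
    · intro h
      obtain ⟨i, hi⟩ := exists_isLow _ l h
      exact ⟨i, ((hlow i).1 hi).1⟩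
    · intro h
      obtain ⟨i, hi⟩ := exists_isLow _ l h
      exact ⟨i, ((hlow i).2 hi).1⟩
  constructor
  · intro h i'
    by_contra hc
    obtain ⟨i, hi⟩ := hiff.2 ⟨i', hc⟩
    exact hi (h i)
  · intro h i'
    by_contra hc
    obtain ⟨i, hi⟩ := hiff.1 ⟨i', hc⟩
    exact hi (h i)
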